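/- Define F₁(1,ℓ) = 2ℓ²[(1 + ℓ²/4)Φ(−ℓ/2) − (ℓ/(2√(2π))) exp(−ℓ²/8)] for ℓ ≥ 0. At any critical point ℓ of F₁(1,·), the second derivative satisfies ∂²F₁/∂ℓ²(1,ℓ) = (ℓ² − 6)Φ(−ℓ/2); consequently every local maximum lies in (0, √6], every local minimum in [√6, ∞), and F₁(1,·) admits a unique local maximum on (0,∞), which is its global maximum. -/

import Mathlib

open Real Set

noncomputable def Phi (x : ℝ) : ℝ :=
  (Real.sqrt (2 * Real.pi))⁻¹ * ∫ y in Set.Iic x, Real.exp (-y ^ 2 / 2)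

/-- `F₁(1,ℓ) = 2ℓ²[(1 + ℓ²/4)Φ(−ℓ/2) − (ℓ/(2√(2π))) e^{−ℓ²/8}]`. -/
noncomputable def F1one (ℓ : ℝ) : ℝ :=
  2 * ℓ ^ 2 * ((1 + ℓ ^ 2 / 4) * Phi (-ℓ / 2)
    - ℓ / (2 * Real.sqrt (2 * Real.pi)) * Real.exp (-ℓ ^ 2 / 8))

section Aux
open MeasureTheory intervalIntegral Filter Topology

lemma gauss_eq : (fun y : ℝ => Real.exp (-y ^ 2 / 2)) = fun y => Real.exp (-(2⁻¹) * y ^ 2) := by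
  funext y; ring_nf

lemma integrable_gauss : Integrable (fun y : ℝ => Real.exp (-y ^ 2 / 2)) := by
  rw [gauss_eq]; exact integrable_exp_neg_mul_sq (by norm_num)

lemma sqrt2pi_pos : 0 < Real.sqrt (2 * Real.pi) :=
  Real.sqrt_pos.2 (by positivity)

lemma integral_gauss : (∫ y : ℝ, Real.exp (-y ^ 2 / 2)) = Real.sqrt (2 * Real.pi) := by
  rw [gauss_eq]
  rw [integral_gaussian, show Real.pi / 2⁻¹ = 2 * Real.pi by ring]

lemma hasDerivAt_Phi (x : ℝ) :
    HasDerivAt Phi ((Real.sqrt (2 * Real.pi))⁻¹ * Real.exp (-x ^ 2 / 2)) x := by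
  have h : Phi = fun x => (Real.sqrt (2 * Real.pi))⁻¹ *
      ((∫ y in Set.Iic (0:ℝ), Real.exp (-y ^ 2 / 2)) + ∫ y in (0:ℝ)..x, Real.exp (-y ^ 2 / 2)) := by
    funext t
    have key := integral_Iic_sub_Iic (f := fun y : ℝ => Real.exp (-y ^ 2 / 2)) (μ := volume)
      (a := 0) (b := t) integrable_gauss.integrableOn integrable_gauss.integrableOn
    unfold Phi
    rw [← key]; ring
  rw [h]
  have h2 : HasDerivAt (fun x : ℝ => ∫ y in (0:ℝ)..x, Real.exp (-y ^ 2 / 2))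
      (Real.exp (-x ^ 2 / 2)) x := by
    refine intervalIntegral.integral_hasDerivAt_right
      integrable_gauss.intervalIntegrable ?_ ?_
    · exact (Real.continuous_exp.comp (by continuity)).stronglyMeasurableAtFilter _ _
    · exact (Real.continuous_exp.comp (by continuity)).continuousAt
  simpa [mul_add] using ((h2.const_add (∫ y in Set.Iic (0:ℝ), Real.exp (-y ^ 2 / 2))).const_mul ((Real.sqrt (2 * Real.pi))⁻¹))

lemma Phi_pos (x : ℝ) : 0 < Phi x := by
  unfold Phi
  apply mul_pos (inv_pos.2 sqrt2pi_pos)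
  rw [setIntegral_pos_iff_support_of_nonneg_ae]
  · have : (Function.support fun y : ℝ => Real.exp (-y ^ 2 / 2)) = Set.univ := by
      ext y; simp [Real.exp_ne_zero]
    rw [this]
    simp [Real.volume_Iic]
  · exact Filter.Eventually.of_forall fun y => (Real.exp_pos _).le
  · exact integrable_gauss.integrableOn

lemma Phi_le_one (x : ℝ) : Phi x ≤ 1 := by
  unfold Phi
  rw [inv_mul_le_iff₀ sqrt2pi_pos, mul_one, ← integral_gauss]
  exact setIntegral_le_integral integrable_gauss
    (Filter.Eventually.of_forall fun y => (Real.exp_pos _).le)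

noncomputable def D1 (ℓ : ℝ) : ℝ :=
  (4 * ℓ + 2 * ℓ ^ 3) * Phi (-ℓ / 2)
    - 4 * ℓ ^ 2 * ((Real.sqrt (2 * Real.pi))⁻¹ * Real.exp (-ℓ ^ 2 / 8))

noncomputable def D2 (ℓ : ℝ) : ℝ :=
  (4 + 6 * ℓ ^ 2) * Phi (-ℓ / 2)
    - 10 * ℓ * ((Real.sqrt (2 * Real.pi))⁻¹ * Real.exp (-ℓ ^ 2 / 8))

lemma hasDerivAt_Phi_half (ℓ : ℝ) :
    HasDerivAt (fun x : ℝ => Phi (-x / 2))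
      (-((Real.sqrt (2 * Real.pi))⁻¹ * Real.exp (-ℓ ^ 2 / 8)) / 2) ℓ := by
  have hinner : HasDerivAt (fun x : ℝ => -x / 2) (-1 / 2 : ℝ) ℓ := by
    simpa using (hasDerivAt_id ℓ).neg.div_const 2
  have h := (hasDerivAt_Phi (-ℓ / 2)).comp ℓ hinner
  refine h.congr_deriv ?_
  rw [show -(-ℓ / 2) ^ 2 / 2 = -ℓ ^ 2 / 8 by ring]
  ring

lemma hasDerivAt_exp8 (ℓ : ℝ) :
    HasDerivAt (fun x : ℝ => Real.exp (-x ^ 2 / 8))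
      (Real.exp (-ℓ ^ 2 / 8) * (-ℓ / 4)) ℓ := by
  have h : HasDerivAt (fun x : ℝ => -x ^ 2 / 8) (-ℓ / 4) ℓ := by
    have := (hasDerivAt_pow 2 ℓ).neg.div_const 8
    refine this.congr_deriv ?_; ring
  exact h.exp

lemma hasDerivAt_F1one (ℓ : ℝ) : HasDerivAt F1one (D1 ℓ) ℓ := by
  have c0 : Real.sqrt (2 * Real.pi) ≠ 0 := ne_of_gt sqrt2pi_pos
  have h1 : HasDerivAt (fun x : ℝ => 2 * x ^ 2) (4 * ℓ) ℓ := by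
    have := (hasDerivAt_pow 2 ℓ).const_mul (2:ℝ)
    refine this.congr_deriv ?_; ring
  have h2 : HasDerivAt (fun x : ℝ => 1 + x ^ 2 / 4) (ℓ / 2) ℓ := by
    have := ((hasDerivAt_pow 2 ℓ).div_const 4).const_add (1:ℝ)
    refine this.congr_deriv ?_; ring
  have h3 : HasDerivAt (fun x : ℝ => x / (2 * Real.sqrt (2 * Real.pi)))
      (1 / (2 * Real.sqrt (2 * Real.pi))) ℓ := by
    simpa using (hasDerivAt_id ℓ).div_const (2 * Real.sqrt (2 * Real.pi))
  have hin := ((h2.mul (hasDerivAt_Phi_half ℓ)).sub (h3.mul (hasDerivAt_exp8 ℓ)))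
  have H := h1.mul hin
  have : F1one = fun x => (2 * x ^ 2) * ((1 + x ^ 2 / 4) * Phi (-x / 2)
      - x / (2 * Real.sqrt (2 * Real.pi)) * Real.exp (-x ^ 2 / 8)) := rfl
  rw [this]
  refine (H.congr_deriv ?_)
  simp only [Pi.mul_apply, Pi.sub_apply]
  unfold D1
  field_simp
  ring

lemma hasDerivAt_D1 (ℓ : ℝ) : HasDerivAt D1 (D2 ℓ) ℓ := by
  have h1 : HasDerivAt (fun x : ℝ => 4 * x + 2 * x ^ 3) (4 + 6 * ℓ ^ 2) ℓ := by
    have := ((hasDerivAt_id ℓ).const_mul (4:ℝ)).add ((hasDerivAt_pow 3 ℓ).const_mul (2:ℝ))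
    refine this.congr_deriv ?_; ring
  have h2 : HasDerivAt (fun x : ℝ => 4 * x ^ 2) (8 * ℓ) ℓ := by
    have := (hasDerivAt_pow 2 ℓ).const_mul (4:ℝ)
    refine this.congr_deriv ?_; ring
  have h3 : HasDerivAt (fun x : ℝ => (Real.sqrt (2 * Real.pi))⁻¹ * Real.exp (-x ^ 2 / 8))
      ((Real.sqrt (2 * Real.pi))⁻¹ * (Real.exp (-ℓ ^ 2 / 8) * (-ℓ / 4))) ℓ :=
    (hasDerivAt_exp8 ℓ).const_mul _
  have H := (h1.mul (hasDerivAt_Phi_half ℓ)).sub (h2.mul h3)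
  refine (H.congr_deriv ?_)
  unfold D2
  field_simp
  ring

lemma deriv_F1one : deriv F1one = D1 := funext fun ℓ => (hasDerivAt_F1one ℓ).deriv

lemma iteratedDeriv_two (ℓ : ℝ) : iteratedDeriv 2 F1one ℓ = D2 ℓ := by
  rw [show (2:ℕ) = 1 + 1 from rfl, iteratedDeriv_succ, iteratedDeriv_one, deriv_F1one]
  exact (hasDerivAt_D1 ℓ).deriv

lemma critical_second (ℓ : ℝ) (hℓ : 0 < ℓ) (h : D1 ℓ = 0) :
    D2 ℓ = (ℓ ^ 2 - 6) * Phi (-ℓ / 2) := by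
  unfold D1 at h
  unfold D2
  have h4 : (4:ℝ) * ℓ ≠ 0 := by positivity
  apply mul_left_cancel₀ h4
  linear_combination (10:ℝ) * h

lemma sqrt2pi_ge_two : 2 ≤ Real.sqrt (2 * Real.pi) := by
  rw [Real.le_sqrt (by norm_num) (by positivity)]
  nlinarith [Real.pi_gt_three]

lemma sqrt2pi_le : Real.sqrt (2 * Real.pi) ≤ 2.51 := by
  rw [show (2.51:ℝ) = Real.sqrt (2.51 ^ 2) by rw [Real.sqrt_sq]; norm_num]
  apply Real.sqrt_le_sqrt
  nlinarith [Real.pi_lt_d2]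

/-- integral of -y e^{-y²/2} over Iic (-x) equals e^{-x²/2} -/
lemma integral_y_gauss (x : ℝ) :
    ∫ y in Set.Iic (-x), (-y) * Real.exp (-y ^ 2 / 2) = Real.exp (-x ^ 2 / 2) := by
  have hderiv : ∀ y ∈ Set.Iic (-x), HasDerivAt (fun y : ℝ => Real.exp (-y ^ 2 / 2))
      ((-y) * Real.exp (-y ^ 2 / 2)) y := by
    intro y _
    have h : HasDerivAt (fun y : ℝ => -y ^ 2 / 2) (-y) y := by
      have := (hasDerivAt_pow 2 y).neg.div_const 2
      refine this.congr_deriv ?_; ring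
    have := h.exp
    convert this using 1; ring
  have hint : IntegrableOn (fun y : ℝ => (-y) * Real.exp (-y ^ 2 / 2)) (Set.Iic (-x)) := by
    have h := ((integrable_mul_exp_neg_mul_sq (b := 2⁻¹) (by norm_num)).neg).congr
      (Filter.Eventually.of_forall (fun y : ℝ => by
        show -(y * Real.exp (-2⁻¹ * y ^ 2)) = -y * Real.exp (-y ^ 2 / 2)
        rw [show -(2⁻¹:ℝ) * y ^ 2 = -y ^ 2 / 2 by ring]; ring))
    exact h.integrableOn
  have htend : Tendsto (fun y : ℝ => Real.exp (-y ^ 2 / 2)) atBot (𝓝 0) := by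
    have hsq : Tendsto (fun y : ℝ => y ^ 2) atBot atTop := by
      have h := (tendsto_pow_atTop (n := 2) (two_ne_zero)).comp
        (tendsto_neg_atBot_atTop (G := ℝ))
      refine h.congr fun y => ?_
      show (-y) ^ 2 = y ^ 2
      ring
    have h2 : Tendsto (fun y : ℝ => -y ^ 2) atBot atBot := tendsto_neg_atTop_atBot.comp hsq
    have h3 : Tendsto (fun y : ℝ => -y ^ 2 / 2) atBot atBot :=
      Tendsto.atBot_div_const (by norm_num) h2
    exact Real.tendsto_exp_atBot.comp h3
  rw [integral_Iic_of_hasDerivAt_of_tendsto' hderiv hint htend]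
  simp [neg_pow]

/-- Mills-type bound -/
lemma Phi_neg_le {x : ℝ} (hx : 0 < x) :
    Phi (-x) ≤ (Real.sqrt (2 * Real.pi))⁻¹ * (Real.exp (-x ^ 2 / 2) / x) := by
  unfold Phi
  apply mul_le_mul_of_nonneg_left _ (inv_nonneg.2 sqrt2pi_pos.le)
  have hmono : ∫ y in Set.Iic (-x), Real.exp (-y ^ 2 / 2)
      ≤ ∫ y in Set.Iic (-x), (x⁻¹ * ((-y) * Real.exp (-y ^ 2 / 2))) := by
    apply setIntegral_mono_on integrable_gauss.integrableOn _ measurableSet_Iic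
    · intro y hy
      have hy' : y ≤ -x := hy
      have he := Real.exp_pos (-y ^ 2 / 2)
      rw [show x⁻¹ * ((-y) * Real.exp (-y ^ 2 / 2)) = (-y / x) * Real.exp (-y ^ 2 / 2) by ring]
      nlinarith [(div_le_div_iff_of_pos_right hx).2 (by linarith : x ≤ -y), div_self hx.ne']
    · have h := ((integrable_mul_exp_neg_mul_sq (b := 2⁻¹) (by norm_num)).neg).congr
        (Filter.Eventually.of_forall (fun y : ℝ => by
          show -(y * Real.exp (-2⁻¹ * y ^ 2)) = -y * Real.exp (-y ^ 2 / 2)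
          rw [show -(2⁻¹:ℝ) * y ^ 2 = -y ^ 2 / 2 by ring]; ring))
      exact (h.const_mul x⁻¹).integrableOn
  calc ∫ y in Set.Iic (-x), Real.exp (-y ^ 2 / 2)
      ≤ ∫ y in Set.Iic (-x), (x⁻¹ * ((-y) * Real.exp (-y ^ 2 / 2))) := hmono
    _ = x⁻¹ * ∫ y in Set.Iic (-x), ((-y) * Real.exp (-y ^ 2 / 2)) := MeasureTheory.integral_const_mul _ _
    _ = Real.exp (-x ^ 2 / 2) / x := by rw [integral_y_gauss]; ring

/-- tail bound -/
lemma F1one_tail {x : ℝ} (hx : 0 < x) : F1one x ≤ 512 / x ^ 3 := by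
  set c := Real.sqrt (2 * Real.pi) with hc
  set P := Phi (-x / 2) with hP
  set E := Real.exp (-x ^ 2 / 8) with hE
  have hc2 : 2 ≤ c := sqrt2pi_ge_two
  have hc0 : 0 < c := sqrt2pi_pos
  have hE0 : 0 < E := Real.exp_pos _
  have mills : P ≤ c⁻¹ * (E / (x / 2)) := by
    have := Phi_neg_le (x := x / 2) (by linarith)
    rw [show -(x/2) = -x/2 by ring, show (-(x / 2) ^ 2 / 2) = -x ^ 2 / 8 by ring] at this
    exact this
  -- F1one x = (2x² + x⁴/2) P - x³ * c⁻¹ * E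
  have hF : F1one x = (2 * x ^ 2 + x ^ 4 / 2) * P - x ^ 3 * (c⁻¹ * E) := by
    unfold F1one
    rw [← hP, ← hE, ← hc]
    field_simp
    ring
  have hxP : x * P ≤ 2 * (c⁻¹ * E) := by
    have h2 : c⁻¹ * (E / (x / 2)) = (2 * (c⁻¹ * E)) / x := by field_simp
    rw [h2] at mills
    calc x * P ≤ x * ((2 * (c⁻¹ * E)) / x) := by
          apply mul_le_mul_of_nonneg_left mills hx.le
      _ = 2 * (c⁻¹ * E) := by field_simp
  have step1 : F1one x ≤ 4 * x * (c⁻¹ * E) := by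
    rw [hF]
    have expand : (2 * x ^ 2 + x ^ 4 / 2) * P = (2 * x + x ^ 3 / 2) * (x * P) := by ring
    rw [expand]
    have hpos : (0:ℝ) ≤ 2 * x + x ^ 3 / 2 := by positivity
    nlinarith [mul_le_mul_of_nonneg_left hxP hpos]
  have hcE : c⁻¹ * E ≤ E / 2 := by
    have hci : c⁻¹ ≤ 2⁻¹ := inv_anti₀ (by norm_num) hc2
    calc c⁻¹ * E ≤ 2⁻¹ * E := mul_le_mul_of_nonneg_right hci hE0.le
      _ = E / 2 := by ring
  have hEb : E ≤ 256 / x ^ 4 := by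
    have h1 : (1:ℝ) + x ^ 2 / 16 ≤ Real.exp (x ^ 2 / 16) := by
      have := Real.add_one_le_exp (x ^ 2 / 16); linarith
    have h2 : x ^ 4 / 256 ≤ Real.exp (x ^ 2 / 8) := by
      have hsq := mul_le_mul h1 h1 (by positivity) (Real.exp_pos _).le
      rw [← Real.exp_add] at hsq
      rw [show x ^ 2 / 16 + x ^ 2 / 16 = x ^ 2 / 8 by ring] at hsq
      nlinarith
    have h3 : E = (Real.exp (x ^ 2 / 8))⁻¹ := by
      rw [hE, ← Real.exp_neg]; ring_nf
    rw [h3, inv_le_comm₀ (Real.exp_pos _) (by positivity), inv_div]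
    exact h2
  calc F1one x ≤ 4 * x * (c⁻¹ * E) := step1
    _ ≤ 4 * x * (E / 2) := by
        apply mul_le_mul_of_nonneg_left hcE (by positivity)
    _ = 2 * x * E := by ring
    _ ≤ 2 * x * (256 / x ^ 4) := by
        apply mul_le_mul_of_nonneg_left hEb (by positivity)
    _ = 512 / x ^ 3 := by field_simp; ring

lemma Phi_half_lb :
    (Real.sqrt (2 * Real.pi))⁻¹ *
      ((1/2) * Real.exp (-(9:ℝ)/8) + (1/2) * Real.exp (-(1:ℝ)/2)) ≤ Phi (-1/2) := by
  unfold Phi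
  apply mul_le_mul_of_nonneg_left _ (inv_nonneg.2 sqrt2pi_pos.le)
  have key : ∫ y in (-(3:ℝ)/2)..(-(1:ℝ)/2), Real.exp (-y ^ 2 / 2)
      ≤ ∫ y in Set.Iic (-(1:ℝ)/2), Real.exp (-y ^ 2 / 2) := by
    rw [intervalIntegral.integral_of_le (by norm_num)]
    apply setIntegral_mono_set integrable_gauss.integrableOn
    · exact Filter.Eventually.of_forall fun y => (Real.exp_pos _).le
    · exact (Set.Ioc_subset_Iic_self).eventuallyLE
  have split : ∫ y in (-(3:ℝ)/2)..(-(1:ℝ)/2), Real.exp (-y ^ 2 / 2)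
      = (∫ y in (-(3:ℝ)/2)..(-(1:ℝ)), Real.exp (-y ^ 2 / 2))
        + ∫ y in (-(1:ℝ))..(-(1:ℝ)/2), Real.exp (-y ^ 2 / 2) :=
    (intervalIntegral.integral_add_adjacent_intervals
      integrable_gauss.intervalIntegrable integrable_gauss.intervalIntegrable).symm
  have b1 : (1/2) * Real.exp (-(9:ℝ)/8) ≤ ∫ y in (-(3:ℝ)/2)..(-(1:ℝ)), Real.exp (-y ^ 2 / 2) := by
    have h := intervalIntegral.integral_mono_on (a := -(3:ℝ)/2) (b := -(1:ℝ))
      (f := fun _ => Real.exp (-(9:ℝ)/8)) (g := fun y => Real.exp (-y ^ 2 / 2))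
      (by norm_num) (intervalIntegrable_const) integrable_gauss.intervalIntegrable ?_
    · rw [intervalIntegral.integral_const] at h
      calc (1/2) * Real.exp (-(9:ℝ)/8) = (-(1:ℝ) - (-(3:ℝ)/2)) • Real.exp (-(9:ℝ)/8) := by
            norm_num
        _ ≤ _ := h
    · intro y hy
      apply Real.exp_le_exp.2
      obtain ⟨h1, h2⟩ := hy
      nlinarith
  have b2 : (1/2) * Real.exp (-(1:ℝ)/2) ≤ ∫ y in (-(1:ℝ))..(-(1:ℝ)/2), Real.exp (-y ^ 2 / 2) := by
    have h := intervalIntegral.integral_mono_on (a := -(1:ℝ)) (b := -(1:ℝ)/2)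
      (f := fun _ => Real.exp (-(1:ℝ)/2)) (g := fun y => Real.exp (-y ^ 2 / 2))
      (by norm_num) (intervalIntegrable_const) integrable_gauss.intervalIntegrable ?_
    · rw [intervalIntegral.integral_const] at h
      calc (1/2) * Real.exp (-(1:ℝ)/2) = (-(1:ℝ)/2 - (-(1:ℝ))) • Real.exp (-(1:ℝ)/2) := by
            norm_num
        _ ≤ _ := h
    · intro y hy
      apply Real.exp_le_exp.2
      obtain ⟨h1, h2⟩ := hy
      nlinarith
  linarith [key, split ▸ (add_le_add b1 b2)]

lemma exp_half_lb : (1/2 : ℝ) ≤ Real.exp (-(1:ℝ)/2) := by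
  have := Real.add_one_le_exp (-(1:ℝ)/2); linarith

lemma exp_98_lb : (9/28 : ℝ) ≤ Real.exp (-(9:ℝ)/8) := by
  have he : Real.exp 1 < 2.7182818286 := Real.exp_one_lt_d9
  have he0 : (0:ℝ) < Real.exp 1 := Real.exp_pos _
  have ha : (7/8 : ℝ) ≤ Real.exp (-(1:ℝ)/8) := by
    have := Real.add_one_le_exp (-(1:ℝ)/8); linarith
  have key : Real.exp (-(9:ℝ)/8) = (Real.exp 1)⁻¹ * Real.exp (-(1:ℝ)/8) := by
    rw [← Real.exp_neg, ← Real.exp_add]; norm_num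
  rw [key]
  have h1 : (2.7182818286 : ℝ)⁻¹ ≤ (Real.exp 1)⁻¹ := by
    apply inv_anti₀ he0 he.le
  calc (9/28 : ℝ) ≤ (2.7182818286 : ℝ)⁻¹ * (7/8) := by norm_num
    _ ≤ (Real.exp 1)⁻¹ * (7/8) := by nlinarith
    _ ≤ (Real.exp 1)⁻¹ * Real.exp (-(1:ℝ)/8) := by
        apply mul_le_mul_of_nonneg_left ha (by positivity)
  
lemma exp_18_ub : Real.exp (-(1:ℝ)/8) ≤ 8/9 := by
  have ha : (9/8 : ℝ) ≤ Real.exp ((1:ℝ)/8) := by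
    have := Real.add_one_le_exp ((1:ℝ)/8); linarith
  rw [show -(1:ℝ)/8 = -((1:ℝ)/8) by norm_num, Real.exp_neg]
  rw [inv_le_comm₀ (Real.exp_pos _) (by norm_num)]
  linarith

lemma F1one_one_lb : (1/20 : ℝ) ≤ F1one 1 := by
  have hc0 : 0 < Real.sqrt (2 * Real.pi) := sqrt2pi_pos
  have hcu : Real.sqrt (2 * Real.pi) ≤ 2.51 := sqrt2pi_le
  have hF : F1one 1 = (5/2) * Phi (-1/2)
      - (Real.sqrt (2 * Real.pi))⁻¹ * Real.exp (-(1:ℝ)/8) := by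
    unfold F1one
    norm_num
    field_simp
    ring
  have hPhi := Phi_half_lb
  have hcinv : (2.51 : ℝ)⁻¹ ≤ (Real.sqrt (2 * Real.pi))⁻¹ :=
    inv_anti₀ hc0 hcu
  have hcinv0 : (0:ℝ) < (Real.sqrt (2 * Real.pi))⁻¹ := by positivity
  have hval : (139/1008 : ℝ) ≤ (5/2) * ((1/2) * Real.exp (-(9:ℝ)/8) + (1/2) * Real.exp (-(1:ℝ)/2))
      - Real.exp (-(1:ℝ)/8) := by
    have := exp_half_lb; have := exp_98_lb; have := exp_18_ub
    linarith
  rw [hF]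
  have step : (Real.sqrt (2 * Real.pi))⁻¹ * (139/1008 : ℝ) ≤ (5/2) * Phi (-1/2)
      - (Real.sqrt (2 * Real.pi))⁻¹ * Real.exp (-(1:ℝ)/8) := by
    nlinarith [mul_le_mul_of_nonneg_left hval hcinv0.le]
  calc (1/20 : ℝ) ≤ (2.51 : ℝ)⁻¹ * (139/1008 : ℝ) := by norm_num
    _ ≤ (Real.sqrt (2 * Real.pi))⁻¹ * (139/1008 : ℝ) := by nlinarith
    _ ≤ _ := step

lemma F1one_small {x : ℝ} (h0 : 0 ≤ x) (h1 : x ≤ 1) : F1one x ≤ 5/2 * x ^ 2 := by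
  have hP1 := Phi_le_one (-x / 2)
  have hP0 := (Phi_pos (-x / 2)).le
  have he := (Real.exp_pos (-x ^ 2 / 8)).le
  have hc := sqrt2pi_pos
  unfold F1one
  have hsub : 0 ≤ x / (2 * Real.sqrt (2 * Real.pi)) * Real.exp (-x ^ 2 / 8) := by positivity
  have hx2 : x ^ 2 ≤ 1 := by nlinarith
  nlinarith [mul_nonneg (by positivity : (0:ℝ) ≤ 2 * x ^ 2) hsub,
    mul_le_mul_of_nonneg_left hP1 (by positivity : (0:ℝ) ≤ 2 * x ^ 2 * (1 + x ^ 2 / 4)),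
    mul_le_mul_of_nonneg_left hx2 (sq_nonneg x)]

lemma contF : Continuous F1one :=
  Differentiable.continuous (fun x => (hasDerivAt_F1one x).differentiableAt)

lemma eventually_pos_right {g : ℝ → ℝ} {a d : ℝ} (hg : HasDerivAt g d a) (h0 : g a = 0)
    (hd : 0 < d) : ∀ᶠ x in 𝓝[>] a, 0 < g x := by
  rw [hasDerivAt_iff_tendsto_slope] at hg
  have h1 : ∀ᶠ y in 𝓝[≠] a, 0 < slope g a y := hg.eventually (eventually_gt_nhds hd)
  have h2 : ∀ᶠ y in 𝓝[>] a, 0 < slope g a y :=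
    h1.filter_mono (nhdsWithin_mono a fun y hy => ne_of_gt hy)
  filter_upwards [h2, self_mem_nhdsWithin] with y hy hy'
  have hya : (0:ℝ) < y - a := sub_pos.2 hy'
  have : slope g a y = g y / (y - a) := by
    rw [slope_def_field, h0]; ring
  rw [this] at hy
  have := mul_pos hy hya
  rwa [div_mul_cancel₀ _ hya.ne'] at this

lemma eventually_neg_right {g : ℝ → ℝ} {a d : ℝ} (hg : HasDerivAt g d a) (h0 : g a = 0)
    (hd : d < 0) : ∀ᶠ x in 𝓝[>] a, g x < 0 := by
  have := eventually_pos_right hg.neg (by simp [h0]) (by linarith : 0 < -d)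
  filter_upwards [this] with y hy
  simpa using hy

lemma not_isLocalMax_of_D2_pos {ℓ : ℝ} (h0 : D1 ℓ = 0) (hd : 0 < D2 ℓ) :
    ¬ IsLocalMax F1one ℓ := by
  intro hmax
  have ev := eventually_pos_right (hasDerivAt_D1 ℓ) h0 hd
  obtain ⟨b, hb, hsub⟩ := mem_nhdsGT_iff_exists_Ioo_subset.1 ev
  have hmax' : ∀ᶠ x in 𝓝[>] ℓ, F1one x ≤ F1one ℓ := hmax.filter_mono nhdsWithin_le_nhds
  have hIoo : Ioo ℓ b ∈ 𝓝[>] ℓ := Ioo_mem_nhdsGT hb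
  obtain ⟨x, hxle, hxmem⟩ := (hmax'.and (eventually_mem_set.2 hIoo)).exists
  -- F strictly mono on [ℓ, x]
  have hmono : StrictMonoOn F1one (Icc ℓ x) := by
    apply strictMonoOn_of_deriv_pos (convex_Icc _ _) contF.continuousOn
    intro y hy
    rw [interior_Icc] at hy
    rw [deriv_F1one]
    exact hsub ⟨hy.1, hy.2.trans hxmem.2⟩
  have : F1one ℓ < F1one x :=
    hmono (left_mem_Icc.2 hxmem.1.le) (right_mem_Icc.2 hxmem.1.le) hxmem.1
  linarith

lemma not_isLocalMin_of_D2_neg {ℓ : ℝ} (h0 : D1 ℓ = 0) (hd : D2 ℓ < 0) :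
    ¬ IsLocalMin F1one ℓ := by
  intro hmin
  have ev := eventually_neg_right (hasDerivAt_D1 ℓ) h0 hd
  obtain ⟨b, hb, hsub⟩ := mem_nhdsGT_iff_exists_Ioo_subset.1 ev
  have hmin' : ∀ᶠ x in 𝓝[>] ℓ, F1one ℓ ≤ F1one x := hmin.filter_mono nhdsWithin_le_nhds
  have hIoo : Ioo ℓ b ∈ 𝓝[>] ℓ := Ioo_mem_nhdsGT hb
  obtain ⟨x, hxle, hxmem⟩ := (hmin'.and (eventually_mem_set.2 hIoo)).exists
  have hanti : StrictAntiOn F1one (Icc ℓ x) := by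
    apply strictAntiOn_of_deriv_neg (convex_Icc _ _) contF.continuousOn
    intro y hy
    rw [interior_Icc] at hy
    rw [deriv_F1one]
    exact hsub ⟨hy.1, hy.2.trans hxmem.2⟩
  have : F1one x < F1one ℓ :=
    hanti (left_mem_Icc.2 hxmem.1.le) (right_mem_Icc.2 hxmem.1.le) hxmem.1
  linarith

lemma localMax_le {ℓ : ℝ} (hℓ : 0 < ℓ) (h : IsLocalMax F1one ℓ) : ℓ ≤ Real.sqrt 6 := by
  by_contra hc
  push_neg at hc
  have hD1 : D1 ℓ = 0 := deriv_F1one ▸ h.deriv_eq_zero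
  have h6 : 6 < ℓ ^ 2 := (Real.sqrt_lt' hℓ).1 hc
  have hD2 : 0 < D2 ℓ := by
    rw [critical_second ℓ hℓ hD1]
    exact mul_pos (by linarith) (Phi_pos _)
  exact not_isLocalMax_of_D2_pos hD1 hD2 h

lemma localMin_ge {ℓ : ℝ} (hℓ : 0 < ℓ) (h : IsLocalMin F1one ℓ) : Real.sqrt 6 ≤ ℓ := by
  by_contra hc
  push_neg at hc
  have hD1 : D1 ℓ = 0 := deriv_F1one ▸ h.deriv_eq_zero
  have h6 : ℓ ^ 2 < 6 := (Real.lt_sqrt hℓ.le).1 hc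
  have hD2 : D2 ℓ < 0 := by
    rw [critical_second ℓ hℓ hD1]
    exact mul_neg_of_neg_of_pos (by linarith) (Phi_pos _)
  exact not_isLocalMin_of_D2_neg hD1 hD2 h

lemma no_two_max {a b : ℝ} (ha : 0 < a) (hb : 0 < b) (hab : a < b)
    (hma : IsLocalMax F1one a) (hmb : IsLocalMax F1one b) : False := by
  have hb6 : b ≤ Real.sqrt 6 := localMax_le hb hmb
  obtain ⟨m, hm, hmin⟩ := isCompact_Icc.exists_isMinOn (nonempty_Icc.2 hab.le)
    contF.continuousOn
  -- helper: an interior point t of [a,b] with F t = min value gives contradiction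
  have interior_min : ∀ t ∈ Ioo a b, IsMinOn F1one (Icc a b) t → False := by
    intro t ht htm
    have hloc : IsLocalMin F1one t := htm.isLocalMin (Icc_mem_nhds ht.1 ht.2)
    have := localMin_ge (lt_trans ha ht.1) hloc
    linarith [ht.2]
  rcases eq_or_lt_of_le hm.1 with h1 | h1
  · -- m = a
    obtain ⟨ε, hε, hball⟩ := Metric.eventually_nhds_iff.1 hma
    set t := min (a + ε/2) ((a+b)/2) with htdef
    have hta : a < t := by
      apply lt_min <;> [linarith; linarith]
    have htb : t < b := by
      apply min_lt_of_right_lt; linarith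
    have htmax : F1one t ≤ F1one a := by
      apply hball
      rw [Real.dist_eq, abs_lt]
      constructor
      · have : a + ε/2 ≥ t := min_le_left _ _
        nlinarith [min_le_left (a + ε/2) ((a+b)/2)]
      · have := min_le_left (a + ε/2) ((a+b)/2)
        simp only [htdef] at *
        nlinarith
    have htmin : F1one a ≤ F1one t := by
      have := hmin (⟨hta.le, htb.le⟩ : t ∈ Icc a b)
      rw [← h1] at this
      exact this
    apply interior_min t ⟨hta, htb⟩
    intro x hx
    calc F1one t ≤ F1one a := htmax
      _ ≤ F1one x := by rw [h1]; exact hmin hx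
  · rcases eq_or_lt_of_le hm.2 with h2 | h2
    · -- m = b
      obtain ⟨ε, hε, hball⟩ := Metric.eventually_nhds_iff.1 hmb
      set t := max (b - ε/2) ((a+b)/2) with htdef
      have hta : a < t := by
        apply lt_max_of_lt_right; linarith
      have htb : t < b := by
        apply max_lt <;> linarith
      have htmax : F1one t ≤ F1one b := by
        apply hball
        rw [Real.dist_eq, abs_lt]
        constructor
        · have := le_max_left (b - ε/2) ((a+b)/2)
          simp only [htdef] at *
          nlinarith
        · nlinarith [le_max_left (b - ε/2) ((a+b)/2)]
      have htmin : F1one b ≤ F1one t := by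
        have := hmin (⟨hta.le, htb.le⟩ : t ∈ Icc a b)
        rw [h2] at this
        exact this
      apply interior_min t ⟨hta, htb⟩
      intro x hx
      calc F1one t ≤ F1one b := htmax
        _ ≤ F1one x := by have := hmin hx; rwa [h2] at this
    · exact interior_min m ⟨h1, h2⟩ hmin

lemma exists_global_max : ∃ ℓs : ℝ, 0 < ℓs ∧ IsLocalMax F1one ℓs ∧
    IsMaxOn F1one (Set.Ioi 0) ℓs := by
  obtain ⟨ℓs, hmem, hmax⟩ := isCompact_Icc.exists_isMaxOn
    (nonempty_Icc.2 (by norm_num : (1/10:ℝ) ≤ 30)) contF.continuousOn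
  have hone : F1one 1 ≤ F1one ℓs := hmax (by norm_num : (1:ℝ) ∈ Icc (1/10:ℝ) 30)
  have hkey : ∀ x ∈ Set.Ioi (0:ℝ), F1one x ≤ F1one ℓs := by
    intro x hx
    simp only [Set.mem_Ioi] at hx
    by_cases hx1 : x < 1/10
    · have : F1one x ≤ 5/2 * x ^ 2 := F1one_small hx.le (by linarith)
      have h2 : (5:ℝ)/2 * x ^ 2 ≤ 1/40 := by nlinarith
      linarith [F1one_one_lb]
    · by_cases hx2 : 30 < x
      · have h1 : F1one x ≤ 512 / x ^ 3 := F1one_tail hx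
        have h2 : 512 / x ^ 3 ≤ 512 / 27000 := by
          apply div_le_div_of_nonneg_left (by norm_num) (by norm_num)
          calc (27000:ℝ) = 30 ^ 3 := by norm_num
            _ ≤ x ^ 3 := pow_le_pow_left₀ (by norm_num) hx2.le 3
        have : F1one x ≤ 512/27000 := le_trans h1 h2
        linarith [F1one_one_lb]
      · push_neg at hx1 hx2
        exact hmax ⟨hx1, hx2⟩
  have hpos : 0 < ℓs := lt_of_lt_of_le (by norm_num) hmem.1
  refine ⟨ℓs, hpos, ?_, hkey⟩
  exact IsMaxOn.isLocalMax hkey (Ioi_mem_nhds hpos)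


/-- At any critical point of `F₁(1,·)`, the second derivative equals `(ℓ² − 6)Φ(−ℓ/2)`;
every local maximum lies in `(0,√6]`, every local minimum in `[√6,∞)`, and `F₁(1,·)` admits a
unique local maximum on `(0,∞)`, which is a global maximum there. -/
theorem F1_one_unique_max :
    (∀ ℓ : ℝ, 0 < ℓ → deriv F1one ℓ = 0 →
      iteratedDeriv 2 F1one ℓ = (ℓ ^ 2 - 6) * Phi (-ℓ / 2)) ∧
    (∀ ℓ : ℝ, 0 < ℓ → IsLocalMax F1one ℓ → ℓ ≤ Real.sqrt 6) ∧
    (∀ ℓ : ℝ, 0 < ℓ → IsLocalMin F1one ℓ → Real.sqrt 6 ≤ ℓ) ∧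
    (∃! ℓstar : ℝ, 0 < ℓstar ∧ IsLocalMax F1one ℓstar) ∧
    (∀ ℓstar : ℝ, 0 < ℓstar → IsLocalMax F1one ℓstar → IsMaxOn F1one (Set.Ioi 0) ℓstar) := by
  obtain ⟨ℓs, hpos, hloc, hglob⟩ := exists_global_max
  have huniq : ∀ y : ℝ, 0 < y → IsLocalMax F1one y → y = ℓs := by
    intro y hy hmy
    rcases lt_trichotomy y ℓs with h | h | h
    · exact absurd (no_two_max hy hpos h hmy hloc) (by simp)
    · exact h
    · exact absurd (no_two_max hpos hy h hloc hmy) (by simp)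
  refine ⟨?_, ?_, ?_, ?_, ?_⟩
  · intro ℓ hℓ hd
    rw [iteratedDeriv_two]
    exact critical_second ℓ hℓ (deriv_F1one ▸ hd)
  · intro ℓ hℓ h; exact localMax_le hℓ h
  · intro ℓ hℓ h; exact localMin_ge hℓ h
  · exact ⟨ℓs, ⟨hpos, hloc⟩, fun y ⟨hy1, hy2⟩ => huniq y hy1 hy2⟩
  · intro ℓ0 h0 hm
    have := huniq ℓ0 h0 hm
    subst this
    exact hglob

end Aux
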